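/- Every complex homogeneous quartic polynomial p(x,y,z) of degree exactly 4 with nonzero coefficient a40 of x^4 admits a 4×4 determinantal representation of the form det of [[a40(x−α1y−β1z), −y, 0, 0], [0, x−α2y−β2z, ℓ1, ℓ3], [0, 0, x−α3y−β3z, ℓ2], [z, 0, 0, x−α4y−β4z]] = p(x,y,z), where αi are the roots of p(α,1,0)=0, βi are the roots of p(β,0,1)=0, and ℓ1, ℓ2, ℓ3 are suitable complex linear forms in x, y, z. -/

import Mathlib

set_option maxHeartbeats 1000000

open MvPolynomial

noncomputable def lin (r s t : ℂ) : MvPolynomial (Fin 3) ℂ :=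
  C r * X 0 + C s * X 1 + C t * X 2

namespace Stmt16Aux

lemma det_expand (a40 : ℂ) (m1 m2 m3 m4 L1 L2 L3 : MvPolynomial (Fin 3) ℂ) :
    Matrix.det !![C a40 * m1, -X 1, 0, 0;
       0, m2, L1, L3;
       0, 0, m3, L2;
       X 2, 0, 0, m4]
    = C a40 * (m1 * m2 * m3 * m4) + X 1 * X 2 * (L1 * L2 - m3 * L3) := by
  simp [Matrix.det_succ_row_zero, Fin.sum_univ_succ, Fin.succAbove]
  ring

lemma quad_factor (D E F : ℂ) :
    ∃ u1 u2 v1 v2 : ℂ, D = u1*v1 ∧ E = u1*v2 + u2*v1 ∧ F = u2*v2 := by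
  by_cases hD : D = 0
  · exact ⟨0, 1, E, F, by simp [hD], by ring, by ring⟩
  · obtain ⟨s, hs⟩ := Complex.isAlgClosed.exists_pow_nat_eq (E^2 - 4*D*F) (n := 2) (by norm_num)
    refine ⟨D, (E+s)/2, 1, (E-s)/(2*D), by ring, by field_simp; ring, ?_⟩
    field_simp
    linear_combination hs

lemma eval_smul_pow {F : MvPolynomial (Fin 3) ℂ} {n : ℕ} (h : F.IsHomogeneous n)
    (c : ℂ) (v : Fin 3 → ℂ) :
    eval (c • v) F = c ^ n * eval v F := by
  rw [eval_eq', eval_eq', Finset.mul_sum]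
  apply Finset.sum_congr rfl
  intro d hd
  have hdeg : ∑ i, d i = n := by
    have h1 : d.degree = n := by
      rw [Finsupp.degree_eq_weight_one]; exact h (mem_support_iff.mp hd)
    rw [← h1, Finsupp.degree_apply]
    exact (Finset.sum_subset (Finset.subset_univ _) (by
      intro x _ hx
      exact Finsupp.notMem_support_iff.mp hx)).symm
  calc coeff d F * ∏ i, (c • v) i ^ d i
      = coeff d F * ((∏ i, c ^ d i) * ∏ i, v i ^ d i) := by
        rw [← Finset.prod_mul_distrib]
        simp [mul_pow]
    _ = c ^ n * (coeff d F * ∏ i, v i ^ d i) := by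
        rw [Finset.prod_pow_eq_pow_sum, hdeg]; ring

lemma sub_aeval_dvd2 :
    ∀ r : MvPolynomial (Fin 3) ℂ,
    X 2 ∣ (r - (aeval ![X 0, X 1, 0] : MvPolynomial (Fin 3) ℂ →ₐ[ℂ] MvPolynomial (Fin 3) ℂ) r) := by
  set ψ : MvPolynomial (Fin 3) ℂ →ₐ[ℂ] MvPolynomial (Fin 3) ℂ := aeval ![X 0, X 1, 0] with hψ
  intro r
  induction r using MvPolynomial.induction_on with
  | C a => simp [ψ]
  | add p q hp hq =>
      have : p + q - ψ (p + q) = (p - ψ p) + (q - ψ q) := by rw [map_add]; ring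
      rw [this]; exact dvd_add hp hq
  | mul_X p i hp =>
      have : p * X i - ψ (p * X i) = (p - ψ p) * X i + ψ p * (X i - ψ (X i)) := by
        rw [map_mul]; ring
      rw [this]
      apply dvd_add
      · exact hp.mul_right _
      · apply Dvd.dvd.mul_left
        fin_cases i <;> simp [ψ]

lemma sub_aeval_dvd1 :
    ∀ r : MvPolynomial (Fin 3) ℂ,
    X 1 ∣ (r - (aeval ![X 0, 0, X 2] : MvPolynomial (Fin 3) ℂ →ₐ[ℂ] MvPolynomial (Fin 3) ℂ) r) := by
  set ψ : MvPolynomial (Fin 3) ℂ →ₐ[ℂ] MvPolynomial (Fin 3) ℂ := aeval ![X 0, 0, X 2] with hψ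
  intro r
  induction r using MvPolynomial.induction_on with
  | C a => simp [ψ]
  | add p q hp hq =>
      have : p + q - ψ (p + q) = (p - ψ p) + (q - ψ q) := by rw [map_add]; ring
      rw [this]; exact dvd_add hp hq
  | mul_X p i hp =>
      have : p * X i - ψ (p * X i) = (p - ψ p) * X i + ψ p * (X i - ψ (X i)) := by
        rw [map_mul]; ring
      rw [this]
      apply dvd_add
      · exact hp.mul_right _
      · apply Dvd.dvd.mul_left
        fin_cases i <;> simp [ψ]

lemma eval_aeval3 (f : Fin 3 → MvPolynomial (Fin 3) ℂ) (q : MvPolynomial (Fin 3) ℂ)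
    (v : Fin 3 → ℂ) :
    eval v (aeval (R := ℂ) f q) = eval (fun i => eval v (f i)) q := by
  have h := comp_aeval_apply (f := f) (aeval v : MvPolynomial (Fin 3) ℂ →ₐ[ℂ] ℂ) q
  exact h

lemma peval_aeval (f : Fin 3 → Polynomial ℂ) (q : MvPolynomial (Fin 3) ℂ) (s : ℂ) :
    Polynomial.eval s (aeval (R := ℂ) f q) = eval (fun i => Polynomial.eval s (f i)) q := by
  have h := comp_aeval_apply (f := f) (Polynomial.aeval s : Polynomial ℂ →ₐ[ℂ] ℂ) q
  exact h

noncomputable def ee (a b c : ℕ) : Fin 3 →₀ ℕ :=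
  Finsupp.single 0 a + Finsupp.single 1 b + Finsupp.single 2 c

lemma ee_apply0 (a b c : ℕ) : ee a b c 0 = a := by simp [ee, Finsupp.single_apply]
lemma ee_apply1 (a b c : ℕ) : ee a b c 1 = b := by simp [ee, Finsupp.single_apply]
lemma ee_apply2 (a b c : ℕ) : ee a b c 2 = c := by simp [ee, Finsupp.single_apply]

lemma ee_eq_iff {a b c x y z : ℕ} : ee a b c = ee x y z ↔ a = x ∧ b = y ∧ c = z := by
  constructor
  · intro h
    refine ⟨?_, ?_, ?_⟩
    · have := DFunLike.congr_fun h (0 : Fin 3)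
      simpa [ee_apply0] using this
    · have := DFunLike.congr_fun h (1 : Fin 3)
      simpa [ee_apply1] using this
    · have := DFunLike.congr_fun h (2 : Fin 3)
      simpa [ee_apply2] using this
  · rintro ⟨rfl, rfl, rfl⟩; rfl

lemma deg3 (d : Fin 3 →₀ ℕ) : d.degree = d 0 + d 1 + d 2 := by
  rw [Finsupp.degree_apply, Finset.sum_subset (Finset.subset_univ d.support)
    (fun x _ hx => Finsupp.notMem_support_iff.mp hx), Fin.sum_univ_three]

lemma ee_degree (a b c : ℕ) : (ee a b c).degree = a + b + c := by
  rw [deg3, ee_apply0, ee_apply1, ee_apply2]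

lemma eq_ee (d : Fin 3 →₀ ℕ) : d = ee (d 0) (d 1) (d 2) := by
  ext i
  fin_cases i <;> simp [ee, Finsupp.single_apply]

lemma C_mul_XX (a : ℂ) (i j : Fin 3) :
    C a * (X i * X j) = monomial (Finsupp.single i 1 + Finsupp.single j 1) a := by
  rw [X, X, monomial_mul, C_apply, monomial_mul]
  simp

lemma quad_expand (r : MvPolynomial (Fin 3) ℂ) (h : r.IsHomogeneous 2) :
    r = C (coeff (ee 2 0 0) r) * X 0 ^ 2
      + C (coeff (ee 1 1 0) r) * (X 0 * X 1)
      + C (coeff (ee 1 0 1) r) * (X 0 * X 2)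
      + C (coeff (ee 0 2 0) r) * X 1 ^ 2
      + C (coeff (ee 0 1 1) r) * (X 1 * X 2)
      + C (coeff (ee 0 0 2) r) * X 2 ^ 2 := by
  have e200 : (C (coeff (ee 2 0 0) r) * X 0 ^ 2 : MvPolynomial (Fin 3) ℂ)
      = monomial (ee 2 0 0) (coeff (ee 2 0 0) r) := by
    rw [C_mul_X_pow_eq_monomial]; congr 1; simp [ee]
  have e020 : (C (coeff (ee 0 2 0) r) * X 1 ^ 2 : MvPolynomial (Fin 3) ℂ)
      = monomial (ee 0 2 0) (coeff (ee 0 2 0) r) := by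
    rw [C_mul_X_pow_eq_monomial]; congr 1; simp [ee]
  have e002 : (C (coeff (ee 0 0 2) r) * X 2 ^ 2 : MvPolynomial (Fin 3) ℂ)
      = monomial (ee 0 0 2) (coeff (ee 0 0 2) r) := by
    rw [C_mul_X_pow_eq_monomial]; congr 1; simp [ee]
  have e110 : (C (coeff (ee 1 1 0) r) * (X 0 * X 1) : MvPolynomial (Fin 3) ℂ)
      = monomial (ee 1 1 0) (coeff (ee 1 1 0) r) := by
    rw [C_mul_XX]; congr 1; simp [ee]
  have e101 : (C (coeff (ee 1 0 1) r) * (X 0 * X 2) : MvPolynomial (Fin 3) ℂ)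
      = monomial (ee 1 0 1) (coeff (ee 1 0 1) r) := by
    rw [C_mul_XX]; congr 1; simp [ee]
  have e011 : (C (coeff (ee 0 1 1) r) * (X 1 * X 2) : MvPolynomial (Fin 3) ℂ)
      = monomial (ee 0 1 1) (coeff (ee 0 1 1) r) := by
    rw [C_mul_XX]; congr 1; simp [ee]
  rw [e200, e020, e002, e110, e101, e011]
  apply MvPolynomial.ext
  intro d
  rw [eq_ee d]
  set a := d 0; set b := d 1; set c := d 2
  simp only [coeff_add, coeff_monomial]
  by_cases h2 : a + b + c = 2
  · have ha : a ≤ 2 := by omega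
    have hb : b ≤ 2 := by omega
    have hc : c ≤ 2 := by omega
    interval_cases a <;> interval_cases b <;> interval_cases c <;>
      simp_all [ee_eq_iff]
  · have h0 : coeff (ee a b c) r = 0 :=
      h.coeff_eq_zero (by rw [ee_degree]; omega)
    rw [h0]
    have : ∀ x y z : ℕ, x + y + z = 2 →
        (if ee x y z = ee a b c then coeff (ee x y z) r else 0) = 0 := by
      intro x y z hxyz
      rw [if_neg]
      intro hq
      rw [ee_eq_iff] at hq
      omega
    rw [this 2 0 0 rfl, this 1 1 0 rfl, this 1 0 1 rfl, this 0 2 0 rfl,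
      this 0 1 1 rfl, this 0 0 2 rfl]
    simp

lemma coeff_XXmul (t : MvPolynomial (Fin 3) ℂ) (d : Fin 3 →₀ ℕ) :
    coeff d (X 1 * (X 2 * t)) =
      if d 1 ≠ 0 ∧ d 2 ≠ 0 then coeff (d - Finsupp.single 1 1 - Finsupp.single 2 1) t else 0 := by
  rw [coeff_X_mul']
  by_cases h1 : (1 : Fin 3) ∈ d.support
  · rw [if_pos h1, coeff_X_mul']
    have hd2 : ((d - Finsupp.single 1 1 : Fin 3 →₀ ℕ)) 2 = d 2 := by
      simp [Finsupp.tsub_apply, Finsupp.single_apply]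
    by_cases h2 : (2 : Fin 3) ∈ (d - Finsupp.single 1 1).support
    · rw [if_pos h2, if_pos]
      have := Finsupp.mem_support_iff.mp h2
      exact ⟨Finsupp.mem_support_iff.mp h1, by rwa [hd2] at this⟩
    · rw [if_neg h2, if_neg]
      have := Finsupp.notMem_support_iff.mp h2
      rw [hd2] at this
      simp [this]
  · rw [if_neg h1, if_neg]
    have := Finsupp.notMem_support_iff.mp h1
    simp [this]

lemma factor (q s : MvPolynomial (Fin 3) ℂ) (hq : q.IsHomogeneous 4)
    (hfac : q = X 1 * (X 2 * s)) :
    q = X 1 * (X 2 * homogeneousComponent 2 s) := by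
  ext d
  conv_lhs => rw [hfac]
  rw [coeff_XXmul, coeff_XXmul]
  by_cases h12 : d 1 ≠ 0 ∧ d 2 ≠ 0
  · rw [if_pos h12, if_pos h12, coeff_homogeneousComponent]
    set d' := d - Finsupp.single 1 1 - Finsupp.single 2 1 with hd'
    have hval : d' 0 = d 0 ∧ d' 1 = d 1 - 1 ∧ d' 2 = d 2 - 1 := by
      refine ⟨?_, ?_, ?_⟩ <;> simp [hd', Finsupp.tsub_apply, Finsupp.single_apply]
    by_cases hdeg : d'.degree = 2
    · rw [if_pos hdeg]
    · rw [if_neg hdeg]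
      have hdd : d.degree ≠ 4 := by
        rw [deg3] at hdeg ⊢
        omega
      have : coeff d q = 0 := hq.coeff_eq_zero hdd
      rw [hfac, coeff_XXmul, if_pos h12] at this
      exact this
  · rw [if_neg h12, if_neg h12]

lemma key_lemma (A B Cc D E F a b u1 u2 v1 v2 : ℂ)
    (hu1 : A*a^2 + B*a + D = u1*v1)
    (hu2 : 2*A*a*b + B*b + Cc*a + E = u1*v2 + u2*v1)
    (hu3 : A*b^2 + Cc*b + F = u2*v2) :
    C A * X 0 ^ 2 + C B * (X 0 * X 1) + C Cc * (X 0 * X 2)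
      + C D * X 1 ^ 2 + C E * (X 1 * X 2) + C F * X 2 ^ 2
    = lin 0 u1 u2 * lin 0 v1 v2
      - (X 0 - C a * X 1 - C b * X 2) * lin (-A) (-(B + A*a)) (-(Cc + A*b)) := by
  unfold lin
  have cneg : ∀ x : ℂ, (C (-x) : MvPolynomial (Fin 3) ℂ) = - C x := fun x => by
    rw [eq_neg_iff_add_eq_zero, ← map_add, neg_add_cancel, C_0]
  have h1 : (C u1 * C v1 : MvPolynomial (Fin 3) ℂ)
      = C A * C a * C a + C B * C a + C D := by
    simp only [← map_mul, ← map_add]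
    exact congrArg C (by linear_combination -hu1)
  have h2 : (C u1 * C v2 + C u2 * C v1 : MvPolynomial (Fin 3) ℂ)
      = C 2 * C A * C a * C b + C B * C b + C Cc * C a + C E := by
    simp only [← map_mul, ← map_add]
    exact congrArg C (by linear_combination -hu2)
  have h3 : (C u2 * C v2 : MvPolynomial (Fin 3) ℂ)
      = C A * C b * C b + C Cc * C b + C F := by
    simp only [← map_mul, ← map_add]
    exact congrArg C (by linear_combination -hu3)
  have c2 : (C 2 : MvPolynomial (Fin 3) ℂ) = 2 := by
    rw [map_ofNat]
  rw [cneg, cneg, cneg, C_0]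
  rw [c2] at h2
  have cadd1 : (C (B + A*a) : MvPolynomial (Fin 3) ℂ) = C B + C A * C a := by
    rw [map_add, map_mul]
  have cadd2 : (C (Cc + A*b) : MvPolynomial (Fin 3) ℂ) = C Cc + C A * C b := by
    rw [map_add, map_mul]
  rw [cadd1, cadd2]
  linear_combination (-(X 1 * X 1) : MvPolynomial (Fin 3) ℂ) * h1
    - (X 1 * X 2 : MvPolynomial (Fin 3) ℂ) * h2
    - (X 2 * X 2 : MvPolynomial (Fin 3) ℂ) * h3

end Stmt16Aux

open Stmt16Aux in
theorem stmt16 (p : MvPolynomial (Fin 3) ℂ) (hhom : p.IsHomogeneous 4)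
    (a40 : ℂ) (ha : a40 = coeff (Finsupp.single 0 4) p) (ha0 : a40 ≠ 0)
    (α β : Fin 4 → ℂ)
    (hα : ∀ t : ℂ, eval ![t, 1, 0] p = a40 * ∏ j, (t - α j))
    (hβ : ∀ t : ℂ, eval ![t, 0, 1] p = a40 * ∏ j, (t - β j)) :
    ∃ r1 s1 t1 r2 s2 t2 r3 s3 t3 : ℂ,
      p = Matrix.det
        !![C a40 * (X 0 - C (α 0) * X 1 - C (β 0) * X 2), -X 1, 0, 0;
           0, X 0 - C (α 1) * X 1 - C (β 1) * X 2, lin r1 s1 t1, lin r3 s3 t3;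
           0, 0, X 0 - C (α 2) * X 1 - C (β 2) * X 2, lin r2 s2 t2;
           X 2, 0, 0, X 0 - C (α 3) * X 1 - C (β 3) * X 2] := by
  classical
  set m : Fin 4 → MvPolynomial (Fin 3) ℂ :=
    fun j => X 0 - C (α j) * X 1 - C (β j) * X 2 with hm
  have hmhom : ∀ j, (m j).IsHomogeneous 1 := fun j =>
    ((isHomogeneous_X ℂ 0).sub (isHomogeneous_C_mul_X (α j) 1)).sub
      (isHomogeneous_C_mul_X (β j) 2)
  have hprod : (∏ j, m j).IsHomogeneous 4 := by
    simpa using MvPolynomial.IsHomogeneous.prod Finset.univ m (fun _ => 1)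
      (fun j _ => hmhom j)
  set q : MvPolynomial (Fin 3) ℂ := p - C a40 * ∏ j, m j with hqdef
  have hqhom : q.IsHomogeneous 4 := hhom.sub (hprod.C_mul a40)
  -- evaluations of q on the two slices
  have heval1 : ∀ t : ℂ, eval ![t, 1, 0] q = 0 := by
    intro t
    have hmj : ∀ j, eval ![t, (1:ℂ), 0] (m j) = t - α j := by
      intro j; simp [hm]
    rw [hqdef, map_sub, map_mul, map_prod, eval_C, hα,
      Finset.prod_congr rfl (fun j _ => hmj j)]
    ring
  have heval2 : ∀ t : ℂ, eval ![t, 0, 1] q = 0 := by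
    intro t
    have hmj : ∀ j, eval ![t, (0:ℂ), 1] (m j) = t - β j := by
      intro j; simp [hm]
    rw [hqdef, map_sub, map_mul, map_prod, eval_C, hβ,
      Finset.prod_congr rfl (fun j _ => hmj j)]
    ring
  have hslice1 : ∀ t s : ℂ, eval ![t, s, 0] q = 0 := by
    intro t s
    set φ : Polynomial ℂ := aeval (R := ℂ) ![Polynomial.C t, Polynomial.X, 0] q with hφ
    have hev : ∀ s' : ℂ, Polynomial.eval s' φ = eval ![t, s', 0] q := by
      intro s'
      have hfn : (fun i => Polynomial.eval s' (![Polynomial.C t, Polynomial.X, 0] i))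
          = ![t, s', 0] := by
        funext i; fin_cases i <;> simp
      rw [hφ, peval_aeval, hfn]
    have hroot : ∀ s' : ℂ, s' ≠ 0 → Polynomial.eval s' φ = 0 := by
      intro s' hs'
      rw [hev]
      have hv : ![t, s', 0] = s' • ![t / s', 1, 0] := by
        funext i
        fin_cases i <;> simp [Pi.smul_apply, smul_eq_mul]
        field_simp
      rw [hv, eval_smul_pow hqhom, heval1, mul_zero]
    have hφ0 : φ = 0 := by
      apply Polynomial.eq_zero_of_infinite_isRoot
      apply Set.Infinite.mono (s := ({0}ᶜ : Set ℂ))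
      · intro x hx
        exact hroot x hx
      · exact (Set.finite_singleton (0:ℂ)).infinite_compl
    have := hev s
    rw [hφ0] at this
    simpa using this.symm
  have hslice2 : ∀ t s : ℂ, eval ![t, 0, s] q = 0 := by
    intro t s
    set φ : Polynomial ℂ := aeval (R := ℂ) ![Polynomial.C t, 0, Polynomial.X] q with hφ
    have hev : ∀ s' : ℂ, Polynomial.eval s' φ = eval ![t, 0, s'] q := by
      intro s'
      have hfn : (fun i => Polynomial.eval s' (![Polynomial.C t, 0, Polynomial.X] i))
          = ![t, 0, s'] := by
        funext i; fin_cases i <;> simp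
      rw [hφ, peval_aeval, hfn]
    have hroot : ∀ s' : ℂ, s' ≠ 0 → Polynomial.eval s' φ = 0 := by
      intro s' hs'
      rw [hev]
      have hv : ![t, 0, s'] = s' • ![t / s', 0, 1] := by
        funext i
        fin_cases i <;> simp [Pi.smul_apply, smul_eq_mul]
        field_simp
      rw [hv, eval_smul_pow hqhom, heval2, mul_zero]
    have hφ0 : φ = 0 := by
      apply Polynomial.eq_zero_of_infinite_isRoot
      apply Set.Infinite.mono (s := ({0}ᶜ : Set ℂ))
      · intro x hx
        exact hroot x hx
      · exact (Set.finite_singleton (0:ℂ)).infinite_compl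
    have := hev s
    rw [hφ0] at this
    simpa using this.symm
  -- divisibility by X 1
  set ψ1 : MvPolynomial (Fin 3) ℂ →ₐ[ℂ] MvPolynomial (Fin 3) ℂ := aeval ![X 0, 0, X 2] with hψ1
  set ψ2 : MvPolynomial (Fin 3) ℂ →ₐ[ℂ] MvPolynomial (Fin 3) ℂ := aeval ![X 0, X 1, 0] with hψ2
  have hψ1q : ψ1 q = 0 := by
    apply MvPolynomial.funext
    intro v
    rw [hψ1, eval_aeval3, map_zero]
    have : (fun i => eval v (![X 0, 0, X 2] i)) = ![v 0, 0, v 2] := by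
      funext i; fin_cases i <;> simp
    rw [this]
    exact hslice2 (v 0) (v 2)
  have hψ2q : ψ2 q = 0 := by
    apply MvPolynomial.funext
    intro v
    rw [hψ2, eval_aeval3, map_zero]
    have : (fun i => eval v (![X 0, X 1, 0] i)) = ![v 0, v 1, 0] := by
      funext i; fin_cases i <;> simp
    rw [this]
    exact hslice1 (v 0) (v 1)
  have hX1dvd : X 1 ∣ q := by
    have h := sub_aeval_dvd1 q
    rwa [← hψ1, hψ1q, sub_zero] at h
  obtain ⟨t0, ht0⟩ := hX1dvd
  have hψ2t0 : ψ2 t0 = 0 := by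
    have h1 : ψ2 q = X 1 * ψ2 t0 := by
      rw [ht0, map_mul]
      congr 1
      simp [hψ2]
    rw [hψ2q] at h1
    rcases mul_eq_zero.mp h1.symm with h | h
    · exact absurd h (MvPolynomial.X_ne_zero 1)
    · exact h
  have hX2dvd : X 2 ∣ t0 := by
    have h := sub_aeval_dvd2 t0
    rwa [← hψ2, hψ2t0, sub_zero] at h
  obtain ⟨s0, hs0⟩ := hX2dvd
  have hfac0 : q = X 1 * (X 2 * s0) := by rw [ht0, hs0]
  set q2 : MvPolynomial (Fin 3) ℂ := homogeneousComponent 2 s0 with hq2def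
  have hfac : q = X 1 * (X 2 * q2) := factor q s0 hqhom hfac0
  have hq2hom : q2.IsHomogeneous 2 := homogeneousComponent_isHomogeneous 2 s0
  -- expand q2
  have hexp := quad_expand q2 hq2hom
  obtain ⟨u1, u2, v1, v2, hu1, hu2, hu3⟩ :=
    quad_factor
      (coeff (ee 2 0 0) q2 * (α 2)^2 + coeff (ee 1 1 0) q2 * (α 2) + coeff (ee 0 2 0) q2)
      (2 * coeff (ee 2 0 0) q2 * (α 2) * (β 2) + coeff (ee 1 1 0) q2 * (β 2)
        + coeff (ee 1 0 1) q2 * (α 2) + coeff (ee 0 1 1) q2)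
      (coeff (ee 2 0 0) q2 * (β 2)^2 + coeff (ee 1 0 1) q2 * (β 2) + coeff (ee 0 0 2) q2)
  obtain ⟨w1, w2, w3, hw⟩ : ∃ w1 w2 w3 : ℂ, q2 = lin 0 u1 u2 * lin 0 v1 v2
      - (X 0 - C (α 2) * X 1 - C (β 2) * X 2) * lin w1 w2 w3 := by
    refine ⟨-(coeff (ee 2 0 0) q2),
      -(coeff (ee 1 1 0) q2 + coeff (ee 2 0 0) q2 * (α 2)),
      -(coeff (ee 1 0 1) q2 + coeff (ee 2 0 0) q2 * (β 2)), ?_⟩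
    conv_lhs => rw [hexp]
    exact key_lemma _ _ _ _ _ _ _ _ _ _ _ _ hu1 hu2 hu3
  clear hexp hu1 hu2 hu3
  have hps : p = C a40 * ∏ j, m j + X 1 * (X 2 * q2) := by
    rw [← hfac, hqdef]; ring
  refine ⟨0, u1, u2, 0, v1, v2, w1, w2, w3, ?_⟩
  rw [det_expand, hps, Fin.prod_univ_four, hw]
  simp only [hm]
  ring
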